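/- For even n ≥ 6, the lobster tree B is a perfect phylogeny for C \ {Ω_A}: B displays Ω_B, every χ_j for 2 ≤ j ≤ n-2, and every φ_j for 3 ≤ j ≤ n-1. -/

import Mathlib

namespace PP

/-- A vertex is a leaf (degree at most one) if it has at most one neighbour. -/
def IsLeafVert {V : Type} (G : SimpleGraph V) (w : V) : Prop :=
  ∀ w₁ w₂ : V, G.Adj w w₁ → G.Adj w w₂ → w₁ = w₂

/-- A (finite, unrooted) phylogenetic tree on a label set `X ⊆ L`:
its leaves are bijectively labelled by the elements of `X`. -/
structure PhyloTree {L : Type} (X : Set L) where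
  V : Type
  finV : Finite V
  G : SimpleGraph V
  isTree : G.IsTree
  leaf : L → V
  leaf_injOn : Set.InjOn leaf X
  leaf_isLeaf : ∀ x ∈ X, IsLeafVert G (leaf x)
  leaf_surj : ∀ w, IsLeafVert G w → ∃ x ∈ X, leaf x = w

/-- The vertex set of the minimal subtree `T[S]` spanning the leaves labelled by `S ∩ X`. -/
def subtree {L : Type} {X : Set L} (T : PhyloTree X) (S : Set L) : Set T.V :=
  {w | ∃ x ∈ S ∩ X, ∃ y ∈ S ∩ X,
        ∃ p : T.G.Walk (T.leaf x) (T.leaf y), p.IsPath ∧ w ∈ p.support}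

/-- `T` displays the character `χ` (a state assignment, whose nonempty fibres on `X`
are the states) if the minimal subtrees spanning distinct states are vertex-disjoint. -/
def displays {L : Type} {X : Set L} (T : PhyloTree X) (χ : L → ℕ) : Prop :=
  ∀ s t : ℕ, s ≠ t → Disjoint (subtree T {x | χ x = s}) (subtree T {x | χ x = t})

/-- A set of characters is compatible if some tree on `X` displays all of them. -/
def compatible {L : Type} (X : Set L) (C : Set (L → ℕ)) : Prop :=
  ∃ T : PhyloTree X, ∀ χ ∈ C, displays T χ

/-- Labels: `(false, i)` is `aᵢ`, `(true, i)` is `bᵢ`. -/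
abbrev Lbl : Type := Bool × ℕ

def a (i : ℕ) : Lbl := (false, i)
def b (i : ℕ) : Lbl := (true, i)

/-- `X = {a₁,…,aₙ,b₁,…,bₙ}`. -/
def Xset (n : ℕ) : Set Lbl := {p | 1 ≤ p.2 ∧ p.2 ≤ n}

/-- `X_{≤ i} = {aⱼ, bⱼ : 1 ≤ j ≤ i}`. -/
def XLE (i : ℕ) : Set Lbl := {p | 1 ≤ p.2 ∧ p.2 ≤ i}

/-- χ_j = X_{≤j-2} | a_{j-1} | b_{j-1} | a_j a_{j+1} | b_j b_{j+1} | a_{j+2} | b_{j+2} | X_{≥j+3} -/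
def chi (j : ℕ) : Lbl → ℕ := fun p =>
  if p.2 + 2 ≤ j then 0
  else if p.2 + 1 = j then cond p.1 2 1
  else if p.2 ≤ j + 1 then cond p.1 4 3
  else if p.2 = j + 2 then cond p.1 6 5
  else 7

def phiMain (j i : ℕ) : ℕ :=
  if i < j then 0 else if i = j then 3 else if i = j + 1 then 4 else 5

def phiSide (j i : ℕ) : ℕ :=
  if i + 3 ≤ j then 0 else if i + 2 = j then 1 else if i + 1 = j then 2 else 5

/-- For even j: φ_j = X_{≤j-3}∪{b_{j-2},b_{j-1}} | a_{j-2} | a_{j-1} | b_j | b_{j+1} | {a_j,a_{j+1}}∪X_{≥j+2};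
for odd j the roles of a and b are swapped. -/
def phi (j : ℕ) : Lbl → ℕ := fun p =>
  if j % 2 = 0 then cond p.1 (phiMain j p.2) (phiSide j p.2)
  else cond p.1 (phiSide j p.2) (phiMain j p.2)

/-- Ω_A = a₁b₁b₂ | {a₂} ∪ X_{≥3}. -/
def OmA : Lbl → ℕ := fun p =>
  cond p.1 (if p.2 ≤ 2 then 0 else 1) (if p.2 = 1 then 0 else 1)

/-- Ω_B = X_{≤n-2} ∪ {b_{n-1}} | a_{n-1} aₙ bₙ. -/
def OmB (n : ℕ) : Lbl → ℕ := fun p =>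
  cond p.1 (if p.2 = n then 1 else 0) (if p.2 + 1 ≥ n then 1 else 0)

/-- The edges of the lobster `B`: central path b₁,u₁,…,u_{n-1},bₙ; edges uᵢvᵢ;
for odd i, vᵢ is adjacent to aᵢ and a_{i+1}; for even i, vᵢ is adjacent to bᵢ and b_{i+1}. -/
def AdjSpecB (n : ℕ) {X : Set Lbl} (T : PhyloTree X) (u v : ℕ → T.V) (w w' : T.V) : Prop :=
  (w = T.leaf (b 1) ∧ w' = u 1) ∨
  (∃ i, 1 ≤ i ∧ i + 1 ≤ n - 1 ∧ w = u i ∧ w' = u (i + 1)) ∨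
  (w = u (n - 1) ∧ w' = T.leaf (b n)) ∨
  (∃ i, 1 ≤ i ∧ i ≤ n - 1 ∧ w = u i ∧ w' = v i) ∨
  (∃ i, 1 ≤ i ∧ i ≤ n - 1 ∧ i % 2 = 1 ∧ w = v i ∧
      (w' = T.leaf (a i) ∨ w' = T.leaf (a (i + 1)))) ∨
  (∃ i, 1 ≤ i ∧ i ≤ n - 1 ∧ i % 2 = 0 ∧ w = v i ∧
      (w' = T.leaf (b i) ∨ w' = T.leaf (b (i + 1))))

/-- `T`, with internal vertices `u i`, `v i` (1 ≤ i ≤ n-1), is the lobster `B`. -/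
def IsLobsterB (n : ℕ) (T : PhyloTree (Xset n)) (u v : ℕ → T.V) : Prop :=
  (∀ i j, 1 ≤ i → i ≤ n - 1 → 1 ≤ j → j ≤ n - 1 →
      (u i = u j → i = j) ∧ (v i = v j → i = j) ∧ u i ≠ v j) ∧
  (∀ p ∈ Xset n, ∀ i, 1 ≤ i → i ≤ n - 1 → T.leaf p ≠ u i ∧ T.leaf p ≠ v i) ∧
  (∀ w : T.V, (∃ p ∈ Xset n, T.leaf p = w) ∨
      (∃ i, 1 ≤ i ∧ i ≤ n - 1 ∧ (u i = w ∨ v i = w))) ∧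
  (∀ w w' : T.V, T.G.Adj w w' ↔ (AdjSpecB n T u v w w' ∨ AdjSpecB n T u v w' w))

/-! ### Auxiliary development -/

/-- Attachment index: the index `k` such that the leaf `p` is adjacent to `v k`
(or to `u k` for the special leaves `b 1`, `b n`). -/
def att (n : ℕ) (p : Lbl) : ℕ :=
  cond p.1
    (if p.2 = 1 then 1 else if p.2 = n then n - 1
      else if p.2 % 2 = 0 then p.2 else p.2 - 1)
    (if p.2 % 2 = 1 then p.2 else p.2 - 1)

section Lobster

variable {n : ℕ} {T : PhyloTree (Xset n)} {u v : ℕ → T.V}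

lemma adj_of_spec (hB : IsLobsterB n T u v) {w w' : T.V}
    (h : AdjSpecB n T u v w w') : T.G.Adj w w' :=
  (hB.2.2.2 w w').mpr (Or.inl h)

lemma adj_uu (hB : IsLobsterB n T u v) {i : ℕ} (h1 : 1 ≤ i) (h2 : i + 1 ≤ n - 1) :
    T.G.Adj (u i) (u (i + 1)) :=
  adj_of_spec hB (Or.inr (Or.inl ⟨i, h1, h2, rfl, rfl⟩))

lemma adj_uv (hB : IsLobsterB n T u v) {i : ℕ} (h1 : 1 ≤ i) (h2 : i ≤ n - 1) :
    T.G.Adj (u i) (v i) :=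
  adj_of_spec hB (Or.inr (Or.inr (Or.inr (Or.inl ⟨i, h1, h2, rfl, rfl⟩))))

lemma adj_b1 (hB : IsLobsterB n T u v) : T.G.Adj (T.leaf (b 1)) (u 1) :=
  adj_of_spec hB (Or.inl ⟨rfl, rfl⟩)

lemma adj_bn (hB : IsLobsterB n T u v) : T.G.Adj (u (n - 1)) (T.leaf (b n)) :=
  adj_of_spec hB (Or.inr (Or.inr (Or.inl ⟨rfl, rfl⟩)))

lemma att_bounds (hn : n % 2 = 0) (hn6 : 6 ≤ n) {x : Lbl} (hx : x ∈ Xset n) :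
    1 ≤ att n x ∧ att n x ≤ n - 1 := by
  obtain ⟨bx, i⟩ := x
  obtain ⟨h1, h2⟩ := hx
  cases bx <;> simp only [att, cond_false, cond_true] <;> split_ifs <;> omega

lemma adj_leaf_v (hn : n % 2 = 0) (hn6 : 6 ≤ n) (hB : IsLobsterB n T u v)
    {x : Lbl} (hx : x ∈ Xset n) (hx1 : x ≠ b 1) (hxn : x ≠ b n) :
    T.G.Adj (T.leaf x) (v (att n x)) := by
  obtain ⟨bx, i⟩ := x
  obtain ⟨h1, h2⟩ := hx
  cases bx
  · -- a i
    by_cases hodd : i % 2 = 1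
    · have hatt : att n (false, i) = i := by simp [att, hodd]
      rw [hatt]
      exact (adj_of_spec hB (Or.inr (Or.inr (Or.inr (Or.inr (Or.inl
        ⟨i, h1, by omega, hodd, rfl, Or.inl rfl⟩)))))).symm
    · have hatt : att n (false, i) = i - 1 := by simp [att, hodd]
      have hi2 : 2 ≤ i := by omega
      have hii : i - 1 + 1 = i := by omega
      rw [hatt]
      refine (adj_of_spec hB (Or.inr (Or.inr (Or.inr (Or.inr (Or.inl
        ⟨i - 1, by omega, by omega, by omega, rfl, Or.inr ?_⟩)))))).symm
      rw [show a (i - 1 + 1) = a i by rw [hii]]; rfl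
  · -- b i
    have hne1 : i ≠ 1 := by
      intro h; exact hx1 (by simp [b, h])
    have hnen : i ≠ n := by
      intro h; exact hxn (by simp [b, h])
    by_cases heven : i % 2 = 0
    · have hatt : att n (true, i) = i := by
        simp [att, hne1, hnen, heven]
      rw [hatt]
      exact (adj_of_spec hB (Or.inr (Or.inr (Or.inr (Or.inr (Or.inr
        ⟨i, by omega, by omega, heven, rfl, Or.inl rfl⟩)))))).symm
    · have hatt : att n (true, i) = i - 1 := by
        simp [att, hne1, hnen, heven]
      have hi3 : 3 ≤ i := by omega
      have hii : i - 1 + 1 = i := by omega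
      rw [hatt]
      refine (adj_of_spec hB (Or.inr (Or.inr (Or.inr (Or.inr (Or.inr
        ⟨i - 1, by omega, by omega, by omega, rfl, Or.inr ?_⟩)))))).symm
      rw [show b (i - 1 + 1) = b i by rw [hii]]; rfl

lemma att_b1 (hn6 : 6 ≤ n) : att n (b 1) = 1 := by simp [att, b]

lemma att_bn (hn6 : 6 ≤ n) : att n (b n) = n - 1 := by
  simp only [att, b]
  have : n ≠ 1 := by omega
  simp [this]

/-- A walk along the central path from `u i` to `u k`. -/
lemma exists_walkU (hB : IsLobsterB n T u v) {i : ℕ} (h1 : 1 ≤ i) :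
    ∀ k, i ≤ k → k ≤ n - 1 →
      ∃ q : T.G.Walk (u i) (u k), ∀ w ∈ q.support, ∃ m, i ≤ m ∧ m ≤ k ∧ w = u m := by
  intro k hk hk2
  induction k, hk using Nat.le_induction with
  | base =>
    refine ⟨SimpleGraph.Walk.nil, ?_⟩
    intro w hw
    rw [SimpleGraph.Walk.support_nil, List.mem_singleton] at hw
    exact ⟨i, le_refl _, le_refl _, hw⟩
  | succ k hik ih =>
    obtain ⟨q, hq⟩ := ih (by omega)
    refine ⟨q.concat (adj_uu hB (by omega) (by omega)), ?_⟩
    intro w hw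
    rw [SimpleGraph.Walk.support_concat, List.mem_append,
      List.mem_singleton] at hw
    rcases hw with hw | hw
    · obtain ⟨m, hm1, hm2, hm3⟩ := hq w hw
      exact ⟨m, hm1, by omega, hm3⟩
    · exact ⟨k + 1, by omega, le_refl _, hw⟩

/-- A walk from a leaf to its attachment vertex `u (att n x)`. -/
lemma exists_walkLeaf (hn : n % 2 = 0) (hn6 : 6 ≤ n) (hB : IsLobsterB n T u v)
    {x : Lbl} (hx : x ∈ Xset n) :
    ∃ q : T.G.Walk (T.leaf x) (u (att n x)), ∀ w ∈ q.support,
      w = T.leaf x ∨ w = u (att n x) ∨ (x ≠ b 1 ∧ x ≠ b n ∧ w = v (att n x)) := by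
  by_cases h1 : x = b 1
  · subst h1
    rw [att_b1 hn6]
    refine ⟨SimpleGraph.Walk.cons (adj_b1 hB) SimpleGraph.Walk.nil, ?_⟩
    intro w hw
    simp only [SimpleGraph.Walk.support_cons, SimpleGraph.Walk.support_nil,
      List.mem_cons, List.mem_singleton] at hw
    rcases hw with h | h | h
    · exact Or.inl h
    · exact Or.inr (Or.inl h)
    · exact absurd h (by simp)
  by_cases hn' : x = b n
  · subst hn'
    rw [att_bn hn6]
    refine ⟨SimpleGraph.Walk.cons (adj_bn hB).symm SimpleGraph.Walk.nil, ?_⟩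
    intro w hw
    simp only [SimpleGraph.Walk.support_cons, SimpleGraph.Walk.support_nil,
      List.mem_cons, List.mem_singleton] at hw
    rcases hw with h | h | h
    · exact Or.inl h
    · exact Or.inr (Or.inl h)
    · exact absurd h (by simp)
  · obtain ⟨hb1, hb2⟩ := att_bounds hn hn6 hx
    refine ⟨SimpleGraph.Walk.cons (adj_leaf_v hn hn6 hB hx h1 hn')
      (SimpleGraph.Walk.cons (adj_uv hB hb1 hb2).symm SimpleGraph.Walk.nil), ?_⟩
    intro w hw
    simp only [SimpleGraph.Walk.support_cons, SimpleGraph.Walk.support_nil,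
      List.mem_cons, List.mem_singleton] at hw
    rcases hw with h | h | h | h
    · exact Or.inl h
    · exact Or.inr (Or.inr ⟨h1, hn', h⟩)
    · exact Or.inr (Or.inl h)
    · exact absurd h (by simp)

/-- Walk between two leaves (with `att x ≤ att y`), with controlled support. -/
lemma pair_walk (hn : n % 2 = 0) (hn6 : 6 ≤ n) (hB : IsLobsterB n T u v)
    {x y : Lbl} (hx : x ∈ Xset n) (hy : y ∈ Xset n) (hxy : x ≠ y)
    (hle : att n x ≤ att n y) :
    ∃ q : T.G.Walk (T.leaf x) (T.leaf y), ∀ w ∈ q.support,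
      w = T.leaf x ∨ w = T.leaf y ∨
      (∃ m, min (att n x) (att n y) ≤ m ∧ m ≤ max (att n x) (att n y) ∧ w = u m ∧
        (att n x ≠ att n y ∨ x = b 1 ∨ x = b n ∨ y = b 1 ∨ y = b n)) ∨
      (x ≠ b 1 ∧ x ≠ b n ∧ w = v (att n x)) ∨
      (y ≠ b 1 ∧ y ≠ b n ∧ w = v (att n y)) := by
  by_cases hg : att n x = att n y ∧ x ≠ b 1 ∧ x ≠ b n ∧ y ≠ b 1 ∧ y ≠ b n
  · obtain ⟨he, hx1, hxn, hy1, hyn⟩ := hg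
    have h2 : T.G.Adj (v (att n x)) (T.leaf y) := by
      rw [he]; exact (adj_leaf_v hn hn6 hB hy hy1 hyn).symm
    refine ⟨SimpleGraph.Walk.cons (adj_leaf_v hn hn6 hB hx hx1 hxn)
      (SimpleGraph.Walk.cons h2 SimpleGraph.Walk.nil), ?_⟩
    intro w hw
    simp only [SimpleGraph.Walk.support_cons, SimpleGraph.Walk.support_nil,
      List.mem_cons, List.mem_singleton] at hw
    rcases hw with h | h | h | h
    · exact Or.inl h
    · exact Or.inr (Or.inr (Or.inr (Or.inl ⟨hx1, hxn, h⟩)))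
    · exact Or.inr (Or.inl h)
    · exact absurd h (by simp)
  · have hguard : att n x ≠ att n y ∨ x = b 1 ∨ x = b n ∨ y = b 1 ∨ y = b n := by
      by_contra hc
      push_neg at hc
      exact hg ⟨hc.1, hc.2.1, hc.2.2.1, hc.2.2.2.1, hc.2.2.2.2⟩
    obtain ⟨qx, hqx⟩ := exists_walkLeaf hn hn6 hB hx
    obtain ⟨qy, hqy⟩ := exists_walkLeaf hn hn6 hB hy
    obtain ⟨qu, hqu⟩ := exists_walkU hB (att_bounds hn hn6 hx).1 (att n y) hle
      (att_bounds hn hn6 hy).2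
    refine ⟨qx.append (qu.append qy.reverse), ?_⟩
    intro w hw
    rw [SimpleGraph.Walk.mem_support_append_iff,
      SimpleGraph.Walk.mem_support_append_iff,
      SimpleGraph.Walk.support_reverse, List.mem_reverse] at hw
    rcases hw with hw | hw | hw
    · rcases hqx w hw with h | h | h
      · exact Or.inl h
      · exact Or.inr (Or.inr (Or.inl ⟨att n x, min_le_left _ _,
          le_max_left _ _, h, hguard⟩))
      · exact Or.inr (Or.inr (Or.inr (Or.inl h)))
    · obtain ⟨m, hm1, hm2, hm3⟩ := hqu w hw
      exact Or.inr (Or.inr (Or.inl ⟨m, le_trans (min_le_left _ _) hm1,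
        le_trans hm2 (le_max_right _ _), hm3, hguard⟩))
    · rcases hqy w hw with h | h | h
      · exact Or.inr (Or.inl h)
      · exact Or.inr (Or.inr (Or.inl ⟨att n y, min_le_right _ _,
          le_max_right _ _, h, hguard⟩))
      · exact Or.inr (Or.inr (Or.inr (Or.inr h)))

/-- Core lemma: every vertex of the spanning subtree of a state class is a leaf of
that class, or a `u`/`v` vertex whose designated colour equals the state. -/
lemma core (hn : n % 2 = 0) (hn6 : 6 ≤ n) (hB : IsLobsterB n T u v)
    {χ : Lbl → ℕ} {colU colV : ℕ → ℕ}
    (hV : ∀ x y : Lbl, x ∈ Xset n → y ∈ Xset n → χ x = χ y → x ≠ y →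
      x ≠ b 1 → x ≠ b n → colV (att n x) = χ x)
    (hU : ∀ x y : Lbl, x ∈ Xset n → y ∈ Xset n → χ x = χ y → x ≠ y →
      (att n x ≠ att n y ∨ x = b 1 ∨ x = b n ∨ y = b 1 ∨ y = b n) →
      ∀ k, min (att n x) (att n y) ≤ k → k ≤ max (att n x) (att n y) → colU k = χ x)
    {s : ℕ} :
    ∀ w ∈ subtree T {x | χ x = s},
      (∃ p ∈ Xset n, χ p = s ∧ w = T.leaf p) ∨
      (∃ m, 1 ≤ m ∧ m ≤ n - 1 ∧ w = u m ∧ colU m = s) ∨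
      (∃ k, 1 ≤ k ∧ k ≤ n - 1 ∧ w = v k ∧ colV k = s) := by
  classical
  intro w hw
  obtain ⟨x, hxm, y, hym, p, hp, hwp⟩ := hw
  obtain ⟨hxs, hxX⟩ := hxm
  obtain ⟨hys, hyX⟩ := hym
  simp only [Set.mem_setOf_eq] at hxs hys
  by_cases hxy : x = y
  · subst hxy
    obtain ⟨P, _, hPu⟩ := T.isTree.existsUnique_path (T.leaf x) (T.leaf x)
    have hpn : p = SimpleGraph.Walk.nil := by
      rw [hPu p hp, hPu SimpleGraph.Walk.nil (SimpleGraph.Walk.IsPath.nil)]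
    subst hpn
    rw [SimpleGraph.Walk.support_nil, List.mem_singleton] at hwp
    exact Or.inl ⟨x, hxX, hxs, hwp⟩
  · have finish : ∀ x' y' : Lbl, x' ∈ Xset n → y' ∈ Xset n → χ x' = s → χ y' = s →
        (w = T.leaf x' ∨ w = T.leaf y' ∨
          (∃ m, min (att n x') (att n y') ≤ m ∧ m ≤ max (att n x') (att n y') ∧
            w = u m ∧
            (att n x' ≠ att n y' ∨ x' = b 1 ∨ x' = b n ∨ y' = b 1 ∨ y' = b n)) ∨
          (x' ≠ b 1 ∧ x' ≠ b n ∧ w = v (att n x')) ∨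
          (y' ≠ b 1 ∧ y' ≠ b n ∧ w = v (att n y'))) →
        (x' ≠ y') →
        (∃ p ∈ Xset n, χ p = s ∧ w = T.leaf p) ∨
        (∃ m, 1 ≤ m ∧ m ≤ n - 1 ∧ w = u m ∧ colU m = s) ∨
        (∃ k, 1 ≤ k ∧ k ≤ n - 1 ∧ w = v k ∧ colV k = s) := by
      intro x' y' hx'X hy'X hx's hy's hcase hne
      obtain ⟨hbx1, hbx2⟩ := att_bounds hn hn6 hx'X
      obtain ⟨hby1, hby2⟩ := att_bounds hn hn6 hy'X
      rcases hcase with h | h | ⟨m, hm1, hm2, hm3, hmg⟩ | ⟨h1, h2, h3⟩ | ⟨h1, h2, h3⟩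
      · exact Or.inl ⟨x', hx'X, hx's, h⟩
      · exact Or.inl ⟨y', hy'X, hy's, h⟩
      · refine Or.inr (Or.inl ⟨m, ?_, ?_, hm3, ?_⟩)
        · calc 1 ≤ min (att n x') (att n y') := le_min hbx1 hby1
            _ ≤ m := hm1
        · calc m ≤ max (att n x') (att n y') := hm2
            _ ≤ n - 1 := max_le hbx2 hby2
        · rw [hU x' y' hx'X hy'X (hx's.trans hy's.symm) hne hmg m hm1 hm2, hx's]
      · refine Or.inr (Or.inr ⟨att n x', hbx1, hbx2, h3, ?_⟩)
        rw [hV x' y' hx'X hy'X (hx's.trans hy's.symm) hne h1 h2, hx's]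
      · refine Or.inr (Or.inr ⟨att n y', hby1, hby2, h3, ?_⟩)
        rw [hV y' x' hy'X hx'X (hy's.trans hx's.symm) (Ne.symm hne) h1 h2, hy's]
    rcases le_total (att n x) (att n y) with hle | hle
    · obtain ⟨q, hq⟩ := pair_walk hn hn6 hB hxX hyX hxy hle
      obtain ⟨P, _, hPu⟩ := T.isTree.existsUnique_path (T.leaf x) (T.leaf y)
      have hpq : p = q.bypass := by
        rw [hPu p hp, hPu q.bypass q.bypass_isPath]
      have hwq : w ∈ q.support :=
        SimpleGraph.Walk.support_bypass_subset q (hpq ▸ hwp)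
      exact finish x y hxX hyX hxs hys (hq w hwq) hxy
    · obtain ⟨q, hq⟩ := pair_walk hn hn6 hB hyX hxX (Ne.symm hxy) hle
      obtain ⟨P, _, hPu⟩ := T.isTree.existsUnique_path (T.leaf x) (T.leaf y)
      have hpq : p = q.reverse.bypass := by
        rw [hPu p hp, hPu q.reverse.bypass q.reverse.bypass_isPath]
      have hwq : w ∈ q.support := by
        have := SimpleGraph.Walk.support_bypass_subset q.reverse (hpq ▸ hwp)
        rwa [SimpleGraph.Walk.support_reverse, List.mem_reverse] at this
      exact finish y x hyX hxX hys hxs (hq w hwq) (Ne.symm hxy)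

/-- Master display criterion. -/
lemma disp (hn : n % 2 = 0) (hn6 : 6 ≤ n) (hB : IsLobsterB n T u v)
    {χ : Lbl → ℕ} (colU colV : ℕ → ℕ)
    (hV : ∀ x y : Lbl, x ∈ Xset n → y ∈ Xset n → χ x = χ y → x ≠ y →
      x ≠ b 1 → x ≠ b n → colV (att n x) = χ x)
    (hU : ∀ x y : Lbl, x ∈ Xset n → y ∈ Xset n → χ x = χ y → x ≠ y →
      (att n x ≠ att n y ∨ x = b 1 ∨ x = b n ∨ y = b 1 ∨ y = b n) →
      ∀ k, min (att n x) (att n y) ≤ k → k ≤ max (att n x) (att n y) → colU k = χ x) :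
    displays T χ := by
  intro s t hst
  rw [Set.disjoint_left]
  intro w hws hwt
  have Hs := core hn hn6 hB hV hU w hws
  have Ht := core hn hn6 hB hV hU w hwt
  apply hst
  rcases Hs with ⟨p, hpX, hps, hwp⟩ | ⟨m, hm1, hm2, hwm, hcm⟩ | ⟨k, hk1, hk2, hwk, hck⟩ <;>
    rcases Ht with ⟨p', hpX', hps', hwp'⟩ | ⟨m', hm1', hm2', hwm', hcm'⟩ |
      ⟨k', hk1', hk2', hwk', hck'⟩
  · have : p = p' := T.leaf_injOn hpX hpX' (hwp ▸ hwp')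
    rw [← hps, this, hps']
  · exact absurd (hwp ▸ hwm') ((hB.2.1 p hpX m' hm1' hm2').1).elim
  · exact absurd (hwp ▸ hwk') ((hB.2.1 p hpX k' hk1' hk2').2).elim
  · exact absurd (hwp' ▸ hwm) ((hB.2.1 p' hpX' m hm1 hm2).1).elim
  · have : m = m' := (hB.1 m m' hm1 hm2 hm1' hm2').1 (hwm ▸ hwm')
    rw [← hcm, this, hcm']
  · exact absurd (hwm ▸ hwk') ((hB.1 m k' hm1 hm2 hk1' hk2').2.2).elim
  · exact absurd (hwp' ▸ hwk) ((hB.2.1 p' hpX' k hk1 hk2).2).elim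
  · exact absurd (hwm' ▸ hwk) ((hB.1 m' k hm1' hm2' hk1 hk2).2.2).elim
  · have : k = k' := (hB.1 k k' hk1 hk2 hk1' hk2').2.1 (hwk ▸ hwk')
    rw [← hck, this, hck']

end Lobster


/-! ### Arithmetic characterizations -/

lemma att_a (n i : ℕ) (h : 1 ≤ i) :
    (i % 2 = 1 ∧ att n (false, i) = i) ∨ (i % 2 = 0 ∧ att n (false, i) + 1 = i) := by
  simp only [att, cond_false]; split_ifs <;> omega

lemma att_b (n i : ℕ) (h : 1 ≤ i) :
    (i = 1 ∧ att n (true, i) = 1) ∨ (2 ≤ i ∧ i = n ∧ att n (true, i) + 1 = n) ∨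
    (2 ≤ i ∧ i ≠ n ∧ i % 2 = 0 ∧ att n (true, i) = i) ∨
    (3 ≤ i ∧ i ≠ n ∧ i % 2 = 1 ∧ att n (true, i) + 1 = i) := by
  simp only [att, cond_true]; split_ifs <;> omega

lemma omB_a (n i : ℕ) :
    (n ≤ i + 1 ∧ OmB n (false, i) = 1) ∨ (i + 1 < n ∧ OmB n (false, i) = 0) := by
  simp only [OmB, cond_false]; split_ifs <;> omega

lemma omB_b (n i : ℕ) :
    (i = n ∧ OmB n (true, i) = 1) ∨ (i ≠ n ∧ OmB n (true, i) = 0) := by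
  simp only [OmB, cond_true]; split_ifs <;> omega

lemma chi_a (j i : ℕ) :
    (i + 2 ≤ j ∧ chi j (false, i) = 0) ∨ (i + 1 = j ∧ chi j (false, i) = 1) ∨
    (j ≤ i ∧ i ≤ j + 1 ∧ chi j (false, i) = 3) ∨ (i = j + 2 ∧ chi j (false, i) = 5) ∨
    (j + 3 ≤ i ∧ chi j (false, i) = 7) := by
  simp only [chi, cond_false]; split_ifs <;> omega

lemma chi_b (j i : ℕ) :
    (i + 2 ≤ j ∧ chi j (true, i) = 0) ∨ (i + 1 = j ∧ chi j (true, i) = 2) ∨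
    (j ≤ i ∧ i ≤ j + 1 ∧ chi j (true, i) = 4) ∨ (i = j + 2 ∧ chi j (true, i) = 6) ∨
    (j + 3 ≤ i ∧ chi j (true, i) = 7) := by
  simp only [chi, cond_true]; split_ifs <;> omega

lemma phi_a (j i : ℕ) :
    (j % 2 = 0 ∧ ((i + 3 ≤ j ∧ phi j (false, i) = 0) ∨ (i + 2 = j ∧ phi j (false, i) = 1) ∨
      (i + 1 = j ∧ phi j (false, i) = 2) ∨ (j ≤ i ∧ phi j (false, i) = 5))) ∨
    (j % 2 = 1 ∧ ((i < j ∧ phi j (false, i) = 0) ∨ (i = j ∧ phi j (false, i) = 3) ∨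
      (i = j + 1 ∧ phi j (false, i) = 4) ∨ (j + 2 ≤ i ∧ phi j (false, i) = 5))) := by
  simp only [phi, phiMain, phiSide, cond_false]; split_ifs <;> omega

lemma phi_b (j i : ℕ) :
    (j % 2 = 0 ∧ ((i < j ∧ phi j (true, i) = 0) ∨ (i = j ∧ phi j (true, i) = 3) ∨
      (i = j + 1 ∧ phi j (true, i) = 4) ∨ (j + 2 ≤ i ∧ phi j (true, i) = 5))) ∨
    (j % 2 = 1 ∧ ((i + 3 ≤ j ∧ phi j (true, i) = 0) ∨ (i + 2 = j ∧ phi j (true, i) = 1) ∨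
      (i + 1 = j ∧ phi j (true, i) = 2) ∨ (j ≤ i ∧ phi j (true, i) = 5))) := by
  simp only [phi, phiMain, phiSide, cond_true]; split_ifs <;> omega

set_option maxHeartbeats 4000000 in
theorem lobsterB_compatible_C_minus_OmA (n : ℕ) (hn : Even n) (hn6 : 6 ≤ n)
    (T : PhyloTree (Xset n)) (u v : ℕ → T.V) (hB : IsLobsterB n T u v) :
    displays T (OmB n) ∧
    (∀ j, 2 ≤ j → j ≤ n - 2 → displays T (chi j)) ∧
    (∀ j, 3 ≤ j → j ≤ n - 1 → displays T (phi j)) := by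
  have hn2 : n % 2 = 0 := Nat.even_iff.mp hn
  refine ⟨?_, ?_, ?_⟩
  · -- Ω_B
    refine disp hn2 hn6 hB (fun k => if k + 2 ≤ n then 0 else 1)
      (fun k => if k + 2 ≤ n then 0 else 1) ?_ ?_
    · intro x y hx hy hchi hne hb1 hbn
      obtain ⟨bx, i⟩ := x; obtain ⟨by', iy⟩ := y
      obtain ⟨hxl, hxr⟩ := hx; obtain ⟨hyl, hyr⟩ := hy
      dsimp only at hxl hxr hyl hyr
      beta_reduce
      cases bx <;> cases by'
      · have h1 := att_a n i hxl
        have h4 := att_a n iy hyl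
        have h2 := omB_a n i
        have h3 := omB_a n iy
        simp only [ne_eq, Prod.mk.injEq, b, Bool.false_eq_true, Bool.true_eq_false,
        false_and, true_and, and_false, and_true, eq_self_iff_true,
        not_false_eq_true, not_true_eq_false, false_or, or_false, not_and] at hne hb1 hbn
        split_ifs <;> omega
      · have h1 := att_a n i hxl
        have h4 := att_b n iy hyl
        have h2 := omB_a n i
        have h3 := omB_b n iy
        simp only [ne_eq, Prod.mk.injEq, b, Bool.false_eq_true, Bool.true_eq_false,
        false_and, true_and, and_false, and_true, eq_self_iff_true,
        not_false_eq_true, not_true_eq_false, false_or, or_false, not_and] at hne hb1 hbn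
        split_ifs <;> omega
      · have h1 := att_b n i hxl
        have h4 := att_a n iy hyl
        have h2 := omB_b n i
        have h3 := omB_a n iy
        simp only [ne_eq, Prod.mk.injEq, b, Bool.false_eq_true, Bool.true_eq_false,
        false_and, true_and, and_false, and_true, eq_self_iff_true,
        not_false_eq_true, not_true_eq_false, false_or, or_false, not_and] at hne hb1 hbn
        split_ifs <;> omega
      · have h1 := att_b n i hxl
        have h4 := att_b n iy hyl
        have h2 := omB_b n i
        have h3 := omB_b n iy
        simp only [ne_eq, Prod.mk.injEq, b, Bool.false_eq_true, Bool.true_eq_false,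
        false_and, true_and, and_false, and_true, eq_self_iff_true,
        not_false_eq_true, not_true_eq_false, false_or, or_false, not_and] at hne hb1 hbn
        split_ifs <;> omega
    · intro x y hx hy hchi hne hg k hk1 hk2
      rw [min_le_iff] at hk1
      rw [le_max_iff] at hk2
      obtain ⟨bx, i⟩ := x; obtain ⟨by', iy⟩ := y
      obtain ⟨hxl, hxr⟩ := hx; obtain ⟨hyl, hyr⟩ := hy
      dsimp only at hxl hxr hyl hyr
      beta_reduce
      cases bx <;> cases by'
      · have h1 := att_a n i hxl
        have h4 := att_a n iy hyl
        have h2 := omB_a n i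
        have h3 := omB_a n iy
        simp only [ne_eq, Prod.mk.injEq, b, Bool.false_eq_true, Bool.true_eq_false,
        false_and, true_and, and_false, and_true, eq_self_iff_true,
        not_false_eq_true, not_true_eq_false, false_or, or_false, not_and] at hne hg
        split_ifs <;> omega
      · have h1 := att_a n i hxl
        have h4 := att_b n iy hyl
        have h2 := omB_a n i
        have h3 := omB_b n iy
        simp only [ne_eq, Prod.mk.injEq, b, Bool.false_eq_true, Bool.true_eq_false,
        false_and, true_and, and_false, and_true, eq_self_iff_true,
        not_false_eq_true, not_true_eq_false, false_or, or_false, not_and] at hne hg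
        split_ifs <;> omega
      · have h1 := att_b n i hxl
        have h4 := att_a n iy hyl
        have h2 := omB_b n i
        have h3 := omB_a n iy
        simp only [ne_eq, Prod.mk.injEq, b, Bool.false_eq_true, Bool.true_eq_false,
        false_and, true_and, and_false, and_true, eq_self_iff_true,
        not_false_eq_true, not_true_eq_false, false_or, or_false, not_and] at hne hg
        split_ifs <;> omega
      · have h1 := att_b n i hxl
        have h4 := att_b n iy hyl
        have h2 := omB_b n i
        have h3 := omB_b n iy
        simp only [ne_eq, Prod.mk.injEq, b, Bool.false_eq_true, Bool.true_eq_false,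
        false_and, true_and, and_false, and_true, eq_self_iff_true,
        not_false_eq_true, not_true_eq_false, false_or, or_false, not_and] at hne hg
        split_ifs <;> omega
  · -- χ_j
    intro j hj2 hjn
    refine disp hn2 hn6 hB
      (fun k => if k + 2 ≤ j then 0 else if k ≤ j + 1 then
        (if j % 2 = 0 then 3 else 4) else 7)
      (fun k => if k + 2 ≤ j then 0 else if k + 1 = j then (if j % 2 = 0 then 3 else 4)
        else if k = j then (if j % 2 = 0 then 4 else 3)
        else if k = j + 1 then (if j % 2 = 0 then 3 else 4) else 7) ?_ ?_
    · intro x y hx hy hchi hne hb1 hbn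
      have hjn2 : j + 2 ≤ n := by omega
      obtain ⟨bx, i⟩ := x; obtain ⟨by', iy⟩ := y
      obtain ⟨hxl, hxr⟩ := hx; obtain ⟨hyl, hyr⟩ := hy
      dsimp only at hxl hxr hyl hyr
      beta_reduce
      cases bx <;> cases by'
      · have h1 := att_a n i hxl
        have h4 := att_a n iy hyl
        have h2 := chi_a j i
        have h3 := chi_a j iy
        simp only [ne_eq, Prod.mk.injEq, b, Bool.false_eq_true, Bool.true_eq_false,
        false_and, true_and, and_false, and_true, eq_self_iff_true,
        not_false_eq_true, not_true_eq_false, false_or, or_false, not_and] at hne hb1 hbn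
        split_ifs <;> omega
      · have h1 := att_a n i hxl
        have h4 := att_b n iy hyl
        have h2 := chi_a j i
        have h3 := chi_b j iy
        simp only [ne_eq, Prod.mk.injEq, b, Bool.false_eq_true, Bool.true_eq_false,
        false_and, true_and, and_false, and_true, eq_self_iff_true,
        not_false_eq_true, not_true_eq_false, false_or, or_false, not_and] at hne hb1 hbn
        split_ifs <;> omega
      · have h1 := att_b n i hxl
        have h4 := att_a n iy hyl
        have h2 := chi_b j i
        have h3 := chi_a j iy
        simp only [ne_eq, Prod.mk.injEq, b, Bool.false_eq_true, Bool.true_eq_false,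
        false_and, true_and, and_false, and_true, eq_self_iff_true,
        not_false_eq_true, not_true_eq_false, false_or, or_false, not_and] at hne hb1 hbn
        split_ifs <;> omega
      · have h1 := att_b n i hxl
        have h4 := att_b n iy hyl
        have h2 := chi_b j i
        have h3 := chi_b j iy
        simp only [ne_eq, Prod.mk.injEq, b, Bool.false_eq_true, Bool.true_eq_false,
        false_and, true_and, and_false, and_true, eq_self_iff_true,
        not_false_eq_true, not_true_eq_false, false_or, or_false, not_and] at hne hb1 hbn
        split_ifs <;> omega
    · intro x y hx hy hchi hne hg k hk1 hk2
      have hjn2 : j + 2 ≤ n := by omega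
      rw [min_le_iff] at hk1
      rw [le_max_iff] at hk2
      obtain ⟨bx, i⟩ := x; obtain ⟨by', iy⟩ := y
      obtain ⟨hxl, hxr⟩ := hx; obtain ⟨hyl, hyr⟩ := hy
      dsimp only at hxl hxr hyl hyr
      beta_reduce
      cases bx <;> cases by'
      · have h1 := att_a n i hxl
        have h4 := att_a n iy hyl
        have h2 := chi_a j i
        have h3 := chi_a j iy
        simp only [ne_eq, Prod.mk.injEq, b, Bool.false_eq_true, Bool.true_eq_false,
        false_and, true_and, and_false, and_true, eq_self_iff_true,
        not_false_eq_true, not_true_eq_false, false_or, or_false, not_and] at hne hg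
        split_ifs <;> omega
      · have h1 := att_a n i hxl
        have h4 := att_b n iy hyl
        have h2 := chi_a j i
        have h3 := chi_b j iy
        simp only [ne_eq, Prod.mk.injEq, b, Bool.false_eq_true, Bool.true_eq_false,
        false_and, true_and, and_false, and_true, eq_self_iff_true,
        not_false_eq_true, not_true_eq_false, false_or, or_false, not_and] at hne hg
        split_ifs <;> omega
      · have h1 := att_b n i hxl
        have h4 := att_a n iy hyl
        have h2 := chi_b j i
        have h3 := chi_a j iy
        simp only [ne_eq, Prod.mk.injEq, b, Bool.false_eq_true, Bool.true_eq_false,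
        false_and, true_and, and_false, and_true, eq_self_iff_true,
        not_false_eq_true, not_true_eq_false, false_or, or_false, not_and] at hne hg
        split_ifs <;> omega
      · have h1 := att_b n i hxl
        have h4 := att_b n iy hyl
        have h2 := chi_b j i
        have h3 := chi_b j iy
        simp only [ne_eq, Prod.mk.injEq, b, Bool.false_eq_true, Bool.true_eq_false,
        false_and, true_and, and_false, and_true, eq_self_iff_true,
        not_false_eq_true, not_true_eq_false, false_or, or_false, not_and] at hne hg
        split_ifs <;> omega
  · -- φ_j
    intro j hj3 hjn
    refine disp hn2 hn6 hB
      (fun k => if k + 2 ≤ j then 0 else 5)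
      (fun k => if k + 2 ≤ j then 0 else 5) ?_ ?_
    · intro x y hx hy hchi hne hb1 hbn
      have hjn2 : j + 1 ≤ n := by omega
      obtain ⟨bx, i⟩ := x; obtain ⟨by', iy⟩ := y
      obtain ⟨hxl, hxr⟩ := hx; obtain ⟨hyl, hyr⟩ := hy
      dsimp only at hxl hxr hyl hyr
      beta_reduce
      cases bx <;> cases by'
      · have h1 := att_a n i hxl
        have h4 := att_a n iy hyl
        have h2 := phi_a j i
        have h3 := phi_a j iy
        simp only [ne_eq, Prod.mk.injEq, b, Bool.false_eq_true, Bool.true_eq_false,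
        false_and, true_and, and_false, and_true, eq_self_iff_true,
        not_false_eq_true, not_true_eq_false, false_or, or_false, not_and] at hne hb1 hbn
        split_ifs <;> omega
      · have h1 := att_a n i hxl
        have h4 := att_b n iy hyl
        have h2 := phi_a j i
        have h3 := phi_b j iy
        simp only [ne_eq, Prod.mk.injEq, b, Bool.false_eq_true, Bool.true_eq_false,
        false_and, true_and, and_false, and_true, eq_self_iff_true,
        not_false_eq_true, not_true_eq_false, false_or, or_false, not_and] at hne hb1 hbn
        split_ifs <;> omega
      · have h1 := att_b n i hxl
        have h4 := att_a n iy hyl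
        have h2 := phi_b j i
        have h3 := phi_a j iy
        simp only [ne_eq, Prod.mk.injEq, b, Bool.false_eq_true, Bool.true_eq_false,
        false_and, true_and, and_false, and_true, eq_self_iff_true,
        not_false_eq_true, not_true_eq_false, false_or, or_false, not_and] at hne hb1 hbn
        split_ifs <;> omega
      · have h1 := att_b n i hxl
        have h4 := att_b n iy hyl
        have h2 := phi_b j i
        have h3 := phi_b j iy
        simp only [ne_eq, Prod.mk.injEq, b, Bool.false_eq_true, Bool.true_eq_false,
        false_and, true_and, and_false, and_true, eq_self_iff_true,
        not_false_eq_true, not_true_eq_false, false_or, or_false, not_and] at hne hb1 hbn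
        split_ifs <;> omega
    · intro x y hx hy hchi hne hg k hk1 hk2
      have hjn2 : j + 1 ≤ n := by omega
      rw [min_le_iff] at hk1
      rw [le_max_iff] at hk2
      obtain ⟨bx, i⟩ := x; obtain ⟨by', iy⟩ := y
      obtain ⟨hxl, hxr⟩ := hx; obtain ⟨hyl, hyr⟩ := hy
      dsimp only at hxl hxr hyl hyr
      beta_reduce
      cases bx <;> cases by'
      · have h1 := att_a n i hxl
        have h4 := att_a n iy hyl
        have h2 := phi_a j i
        have h3 := phi_a j iy
        simp only [ne_eq, Prod.mk.injEq, b, Bool.false_eq_true, Bool.true_eq_false,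
        false_and, true_and, and_false, and_true, eq_self_iff_true,
        not_false_eq_true, not_true_eq_false, false_or, or_false, not_and] at hne hg
        split_ifs <;> omega
      · have h1 := att_a n i hxl
        have h4 := att_b n iy hyl
        have h2 := phi_a j i
        have h3 := phi_b j iy
        simp only [ne_eq, Prod.mk.injEq, b, Bool.false_eq_true, Bool.true_eq_false,
        false_and, true_and, and_false, and_true, eq_self_iff_true,
        not_false_eq_true, not_true_eq_false, false_or, or_false, not_and] at hne hg
        split_ifs <;> omega
      · have h1 := att_b n i hxl
        have h4 := att_a n iy hyl
        have h2 := phi_b j i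
        have h3 := phi_a j iy
        simp only [ne_eq, Prod.mk.injEq, b, Bool.false_eq_true, Bool.true_eq_false,
        false_and, true_and, and_false, and_true, eq_self_iff_true,
        not_false_eq_true, not_true_eq_false, false_or, or_false, not_and] at hne hg
        split_ifs <;> omega
      · have h1 := att_b n i hxl
        have h4 := att_b n iy hyl
        have h2 := phi_b j i
        have h3 := phi_b j iy
        simp only [ne_eq, Prod.mk.injEq, b, Bool.false_eq_true, Bool.true_eq_false,
        false_and, true_and, and_false, and_true, eq_self_iff_true,
        not_false_eq_true, not_true_eq_false, false_or, or_false, not_and] at hne hg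
        split_ifs <;> omega

end PP
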